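/- Let f be a monic real polynomial of degree n ≥ 1 satisfying Assumption 1, and let p and q be its even/odd splitting. Then p(x) > 0 and q(x) > 0 for every real x > 0. -/

import Mathlib

open Polynomial

open Polynomial


open Polynomial

lemma coeff_mul_nonneg' {a b : ℝ[X]} (ha : ∀ k, 0 ≤ a.coeff k) (hb : ∀ k, 0 ≤ b.coeff k) :
    ∀ k, 0 ≤ (a * b).coeff k := by
  intro k
  rw [Polynomial.coeff_mul]
  exact Finset.sum_nonneg fun x _ => mul_nonneg (ha _) (hb _)

lemma coeff_comp_neg_X (f : ℝ[X]) (k : ℕ) :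
    (f.comp (-X)).coeff k = (-1) ^ k * f.coeff k := by
  induction f using Polynomial.induction_on' with
  | add p q hp hq => simp [add_comp, hp, hq, mul_add]
  | monomial m a =>
    have hnp : (-X : ℝ[X]) ^ m = C ((-1) ^ m) * X ^ m := by
      rw [neg_pow]; simp [map_pow]
    simp only [monomial_comp, hnp, coeff_monomial, ← mul_assoc, ← C_mul, coeff_C_mul,
      coeff_X_pow, mul_ite, mul_zero, mul_one]
    by_cases h : m = k
    · simp [h, mul_comm]
    · simp only [if_neg h, coeff_C_mul, coeff_X_pow, if_neg (Ne.symm h), mul_zero]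

lemma quad_coeff_nonneg {b c : ℝ} (hb : 0 ≤ b) (hc : 0 ≤ c) (j : ℕ) :
    0 ≤ (X ^ 2 + (C b * X + C c) : ℝ[X]).coeff j := by
  simp only [coeff_add, coeff_C_mul, coeff_X, coeff_C, coeff_X_pow, mul_ite, mul_one, mul_zero]
  split_ifs <;> norm_num <;> positivity

lemma lemA : ∀ N : ℕ, ∀ g : ℝ[X], g.natDegree ≤ N → g.Monic →
    (∀ z : ℂ, Polynomial.aeval z g = 0 → z.re ≤ 0) → ∀ k, 0 ≤ g.coeff k := by
  intro N
  induction N using Nat.strong_induction_on with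
  | _ N ih =>
  intro g hdeg hm hroots k
  by_cases h0 : g.natDegree = 0
  · have hg1 : g = 1 := hm.natDegree_eq_zero.mp h0
    subst hg1
    rw [Polynomial.coeff_one]
    positivity
  · have hdeg1 : 0 < g.natDegree := Nat.pos_of_ne_zero h0
    obtain ⟨z, hz⟩ : ∃ z : ℂ, aeval z g = 0 :=
      IsAlgClosed.exists_aeval_eq_zero ℂ g (natDegree_pos_iff_degree_pos.mp hdeg1).ne'
    by_cases him : z.im = 0
    · -- real root
      have hzre : z = (z.re : ℂ) := Complex.ext rfl (by simp [him])
      have hz' : g.eval z.re = 0 := by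
        have h2 := hz
        rw [hzre] at h2
        erw [aeval_ofReal] at h2
        exact Complex.ofReal_eq_zero.mp h2
      obtain ⟨g₁, hg1⟩ : X - C z.re ∣ g := dvd_iff_isRoot.mpr hz' 
      have hmq : (X - C z.re).Monic := monic_X_sub_C z.re
      have hg₁m : g₁.Monic := hmq.of_mul_monic_left (hg1 ▸ hm)
      have hne : g₁ ≠ 0 := hg₁m.ne_zero
      have hdg : g.natDegree = 1 + g₁.natDegree := by
        rw [hg1, Polynomial.natDegree_mul (X_sub_C_ne_zero z.re) hne, natDegree_X_sub_C]
      have hroots1 : ∀ w : ℂ, Polynomial.aeval w g₁ = 0 → w.re ≤ 0 := by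
        intro w hw
        apply hroots
        rw [hg1, map_mul, hw, mul_zero]
      have hrle : z.re ≤ 0 := hroots z hz
      have hfac : ∀ j, 0 ≤ (X - C z.re).coeff j := by
        intro j
        match j with
        | 0 => simp only [coeff_sub, coeff_X_zero, coeff_C_zero, zero_sub]; linarith
        | 1 => simp
        | (j+2) => simp [coeff_sub, Polynomial.coeff_X, coeff_C]
      have hg₁c : ∀ j, 0 ≤ g₁.coeff j :=
        ih (N - 1) (by omega) g₁ (by omega) hg₁m hroots1
      rw [hg1]
      exact coeff_mul_nonneg' hfac hg₁c k
    · -- complex root, quadratic factor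
      obtain ⟨g₁, hg1⟩ := Polynomial.quadratic_dvd_of_aeval_eq_zero_im_ne_zero g hz him
      set Q : ℝ[X] := X ^ 2 - C (2 * z.re) * X + C (‖z‖ ^ 2) with hQ
      have hQform : Q = X ^ 2 + (C (-(2 * z.re)) * X + C (‖z‖ ^ 2)) := by
        rw [hQ, map_neg]; ring
      have hQm : Q.Monic := by
        rw [hQform]
        apply monic_X_pow_add
        apply lt_of_le_of_lt (degree_add_le _ _)
        have h1 : (C (-(2 * z.re)) * X : ℝ[X]).degree ≤ 1 := by
          apply le_trans (degree_mul_le _ _)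
          simpa using add_le_add degree_C_le (le_refl (X : ℝ[X]).degree)
        have h2 : (C (‖z‖ ^ 2) : ℝ[X]).degree ≤ 0 := degree_C_le
        rw [max_lt_iff]
        constructor
        · exact lt_of_le_of_lt h1 (by norm_num)
        · exact lt_of_le_of_lt h2 (by norm_num)
      have hg₁m : g₁.Monic := hQm.of_mul_monic_left (hg1 ▸ hm)
      have hne : g₁ ≠ 0 := hg₁m.ne_zero
      have hQdeg : Q.natDegree = 2 := by
        have := hQm.natDegree_eq_zero
        rw [hQform]
        compute_degree!
      have hdg : g.natDegree = 2 + g₁.natDegree := by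
        rw [hg1, Polynomial.natDegree_mul hQm.ne_zero hne, hQdeg]
      have hroots1 : ∀ w : ℂ, Polynomial.aeval w g₁ = 0 → w.re ≤ 0 := by
        intro w hw
        apply hroots
        rw [hg1, map_mul, hw, mul_zero]
      have hrle : z.re ≤ 0 := hroots z hz
      have hfac : ∀ j, 0 ≤ Q.coeff j := by
        intro j
        rw [hQform]
        exact quad_coeff_nonneg (by linarith) (by positivity) j
      have hg₁c : ∀ j, 0 ≤ g₁.coeff j :=
        ih (N - 1) (by omega) g₁ (by omega) hg₁m hroots1
      rw [hg1]
      exact coeff_mul_nonneg' hfac hg₁c k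




/-- Let `f` be a monic real polynomial of degree `n ≥ 1` satisfying
Assumption 1 (all complex roots have nonnegative real part, at least one has positive
real part), and let `p`, `q` be its even/odd splitting: `p` collects the terms
`a_{n-2i} x^{n-2i}` and `q` the terms `a_{n-(2i+1)} x^{n-(2i+1)}` where
`a_j = (-1)^(n-j) coeff_j f`, so that `f = p - q` and both have nonnegative
coefficients. Then `p x > 0` and `q x > 0` for every real `x > 0`. -/
theorem stmt5 (f : Polynomial ℝ) (n : ℕ) (hn : 1 ≤ n)
    (hmonic : f.Monic) (hdeg : f.natDegree = n)
    (has1 : ∀ z : ℂ, (Polynomial.aeval z) f = 0 → 0 ≤ z.re)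
    (has2 : ∃ z : ℂ, (Polynomial.aeval z) f = 0 ∧ 0 < z.re)
    (p q : ℝ → ℝ)
    (hp : ∀ x : ℝ, p x =
      ∑ j ∈ Finset.range (n + 1), if (n + j) % 2 = 0 then f.coeff j * x ^ j else 0)
    (hq : ∀ x : ℝ, q x =
      ∑ j ∈ Finset.range (n + 1), if (n + j) % 2 = 1 then -(f.coeff j) * x ^ j else 0) :
    ∀ x : ℝ, 0 < x → 0 < p x ∧ 0 < q x := by
  -- the "reversed" polynomial h(X) = (-1)^n f(-X)
  set h : ℝ[X] := C ((-1 : ℝ) ^ n) * f.comp (-X) with hh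
  have hcc : ∀ k, h.coeff k = (-1 : ℝ) ^ (n + k) * f.coeff k := by
    intro k
    rw [hh, coeff_C_mul, coeff_comp_neg_X, ← mul_assoc, ← pow_add]
  have hcompdeg : (f.comp (-X : ℝ[X])).natDegree = n := by
    rw [natDegree_comp, hdeg, natDegree_neg, natDegree_X, mul_one]
  have hlcneg : (-X : ℝ[X]).leadingCoeff = -1 := by
    rw [leadingCoeff_neg, leadingCoeff_X]
  have hcomplc : (f.comp (-X : ℝ[X])).leadingCoeff = (-1 : ℝ) ^ n := by
    rw [leadingCoeff_comp (by rw [natDegree_neg, natDegree_X]; norm_num), hlcneg,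
      hmonic.leadingCoeff, one_mul, hdeg]
  have hhm : h.Monic := by
    have : h.leadingCoeff = 1 := by
      rw [hh, leadingCoeff_mul, leadingCoeff_C, hcomplc, ← pow_add]
      exact (neg_one_pow_eq_one_iff_even (by norm_num)).mpr (Even.add_self n)
    exact this
  have hhroots : ∀ z : ℂ, Polynomial.aeval z h = 0 → z.re ≤ 0 := by
    intro z hz
    rw [hh, map_mul, aeval_C, aeval_comp, map_neg, aeval_X] at hz
    have hne : (algebraMap ℝ ℂ) ((-1 : ℝ) ^ n) ≠ 0 := by
      simp [pow_ne_zero]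
    have : Polynomial.aeval (-z) f = 0 := by
      rcases mul_eq_zero.mp hz with h' | h'
      · exact absurd h' hne
      · exact h'
    have := has1 _ this
    simp only [Complex.neg_re] at this
    linarith
  have hsign : ∀ k, 0 ≤ (-1 : ℝ) ^ (n + k) * f.coeff k := by
    intro k
    rw [← hcc k]
    exact lemA h.natDegree h le_rfl hhm hhroots k
  have heven : ∀ k, (n + k) % 2 = 0 → 0 ≤ f.coeff k := by
    intro k hk
    have he : Even (n + k) := Nat.even_iff.mpr hk
    have := hsign k
    rwa [he.neg_one_pow, one_mul] at this
  have hodd : ∀ k, (n + k) % 2 = 1 → 0 ≤ -(f.coeff k) := by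
    intro k hk
    have ho : Odd (n + k) := Nat.odd_iff.mpr hk
    have := hsign k
    rw [ho.neg_one_pow] at this
    linarith
  -- strict positivity of a_{n-1} = -coeff_{n-1}
  set F : ℂ[X] := f.map (algebraMap ℝ ℂ) with hF
  have hFm : F.Monic := hmonic.map _
  have hFd : F.natDegree = n := by rw [hF, natDegree_map_eq_of_injective (algebraMap ℝ ℂ).injective, hdeg]
  have hFroot : ∀ z : ℂ, F.IsRoot z ↔ Polynomial.aeval z f = 0 := by
    intro z
    rw [IsRoot, hF, eval_map, ← aeval_def]
  have hsplits : F.Splits := IsAlgClosed.splits F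
  have hnext : F.nextCoeff = -F.roots.sum :=
    hsplits.nextCoeff_eq_neg_sum_roots_of_monic hFm
  have hnext2 : F.nextCoeff = (f.coeff (n - 1) : ℂ) := by
    rw [nextCoeff_of_natDegree_pos (by omega : 0 < F.natDegree), hFd, hF, coeff_map]
    rfl
  obtain ⟨z0, hz0, hz0re⟩ := has2
  have hz0mem : z0 ∈ F.roots := by
    rw [mem_roots hFm.ne_zero, hFroot]
    exact hz0
  have hsumpos : 0 < (F.roots.sum).re := by
    rw [← Multiset.cons_erase hz0mem, Multiset.sum_cons, Complex.add_re]
    have hrest : 0 ≤ ((F.roots.erase z0).sum).re := by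
      have hmap : ((F.roots.erase z0).sum).re = ((F.roots.erase z0).map Complex.re).sum :=
        map_multiset_sum Complex.reAddGroupHom _
      rw [hmap]
      apply Multiset.sum_nonneg
      intro r hr
      obtain ⟨w, hw, rfl⟩ := Multiset.mem_map.mp hr
      have hwroot : w ∈ F.roots := Multiset.mem_of_mem_erase hw
      rw [mem_roots hFm.ne_zero, hFroot] at hwroot
      exact has1 w hwroot
    linarith
  have hkey : 0 < -(f.coeff (n - 1)) := by
    have : (f.coeff (n - 1) : ℂ) = -F.roots.sum := by rw [← hnext2, hnext]
    have hre : f.coeff (n - 1) = -(F.roots.sum).re := by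
      have := congrArg Complex.re this
      simpa using this
    rw [hre]
    linarith
  -- conclude
  intro x hx
  constructor
  · rw [hp x]
    apply Finset.sum_pos'
    · intro j _
      split_ifs with hc
      · exact mul_nonneg (heven j hc) (pow_nonneg hx.le j)
      · exact le_refl 0
    · refine ⟨n, Finset.self_mem_range_succ n, ?_⟩
      rw [if_pos (by omega : (n + n) % 2 = 0)]
      have : f.coeff n = 1 := by rw [← hdeg]; exact hmonic.coeff_natDegree
      rw [this, one_mul]
      positivity
  · rw [hq x]
    apply Finset.sum_pos'
    · intro j _
      split_ifs with hc
      · exact mul_nonneg (hodd j hc) (pow_nonneg hx.le j)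
      · exact le_refl 0
    · refine ⟨n - 1, Finset.mem_range.mpr (by omega), ?_⟩
      rw [if_pos (by omega : (n + (n - 1)) % 2 = 1)]
      exact mul_pos hkey (pow_pos hx _)
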